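/- The Sugeno integral is unchanged when the upper Möbius transform m^* = v is replaced by the lower Möbius transform m_*: sup_{A ⊆ N} ( (inf_{i∈A} f_i) ∧ v(A) ) = sup_{A ⊆ N} ( (inf_{i∈A} f_i) ∧ m_*(A) ), where m_*(A) = v(A) if v(A) > v(A∖{j}) for all j ∈ A, and 0 otherwise. -/

import Mathlib

/-- The lower ordinal Möbius transform of a set function. -/
def mstar {N : Type*} [Fintype N] [DecidableEq N] {L : Type*} [LinearOrder L] [OrderBot L]
    (v : Finset N → L) (A : Finset N) : L :=
  if ∀ j ∈ A, v (A.erase j) < v A then v A else ⊥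

/-- the Sugeno integral is unchanged when the upper Möbius
transform m^* = v is replaced by the lower Möbius transform m_*. -/
theorem sugeno_mstar_representation
    {N : Type*} [Fintype N] [DecidableEq N]
    {L : Type*} [LinearOrder L] [BoundedOrder L]
    (v : Finset N → L)
    (hempty : v ∅ = ⊥) (hfull : v Finset.univ = ⊤)
    (hmono : ∀ A B : Finset N, A ⊆ B → v A ≤ v B)
    (f : N → L) :
    Finset.univ.powerset.sup (fun A : Finset N => A.inf f ⊓ v A) =
      Finset.univ.powerset.sup (fun A : Finset N => A.inf f ⊓ mstar v A) := by
  apply le_antisymm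
  · -- for each A, find minimal B ⊆ A with v B ≥ v A
    apply Finset.sup_le
    intro A hA
    classical
    obtain ⟨B, hBmem, hBmin⟩ := Finset.exists_minimal
      (s := A.powerset.filter (fun B => v A ≤ v B))
      ⟨A, by simp [Finset.mem_filter]⟩
    rw [Finset.mem_filter, Finset.mem_powerset] at hBmem
    obtain ⟨hBA, hvB⟩ := hBmem
    have hall : ∀ j ∈ B, v (B.erase j) < v B := by
      intro j hj
      by_contra h
      push_neg at h
      exact (Finset.erase_ssubset hj).not_ge (hBmin
        (by
          show B.erase j ∈ _
          rw [Finset.mem_filter, Finset.mem_powerset]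
          exact ⟨(Finset.erase_subset _ _).trans hBA, hvB.trans h⟩)
        (Finset.erase_subset _ _))
    have hm : mstar v B = v B := if_pos hall
    calc A.inf f ⊓ v A ≤ B.inf f ⊓ mstar v B := by
          rw [hm]
          exact inf_le_inf (Finset.inf_mono hBA) hvB
      _ ≤ _ := Finset.le_sup (f := fun A : Finset N => A.inf f ⊓ mstar v A) (by simp)
  · apply Finset.sup_le
    intro A hA
    refine le_trans ?_ (Finset.le_sup hA)
    refine inf_le_inf_left _ ?_
    unfold mstar
    split
    · exact le_rfl
    · exact bot_le
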